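/- In the dot-product protocol, if β - α = a/b + h·R₂/(b·R₃) - α where a = Σ_{j=1}^d U_j · y' - c · y', h = gᵀ · y', U = Q·X, b = Σ_{j=1}^d Q_{j,r}, c = Σ_{i≠r}(x_iᵀ · Σ_{j=1}^d Q_{j,i}) + R₁R₂fᵀ, g = R₁R₃f, X has r-th row (x₁,...,x_L,1) and i-th row x_i for i≠r, and y' = (y₁,...,y_L,α)ᵀ, then β - α = xᵀ·y, assuming b ≠ 0 and R₃ ≠ 0. -/

import Mathlib

open Finset in
/-- Correctness of the (raw) two-party dot-product protocol: with the messages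
`U = Q·X`, `c`, `g` from `P₀` and `a`, `h` from `P_i`, and
`β = a/b + h·R₂/(b·R₃)`, it holds that `β - α = xᵀ·y`. -/
theorem stmt_4 (L d : ℕ) (Q : Matrix (Fin d) (Fin d) ℝ) (r : Fin d)
    (f : Fin (L + 1) → ℝ) (R₁ R₂ R₃ : ℝ) (hR₃ : R₃ ≠ 0)
    (x y : Fin L → ℝ) (α : ℝ)
    (X : Matrix (Fin d) (Fin (L + 1)) ℝ)
    (hXr : X r = Fin.snoc x 1)
    (y' : Fin (L + 1) → ℝ) (hy' : y' = Fin.snoc y α)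
    (U : Matrix (Fin d) (Fin (L + 1)) ℝ) (hU : U = Q * X)
    (b : ℝ) (hb : b = ∑ j, Q j r) (hb0 : b ≠ 0)
    (c : Fin (L + 1) → ℝ)
    (hc : c = (∑ i ∈ univ.erase r, (∑ j, Q j i) • X i) + (R₁ * R₂) • f)
    (g : Fin (L + 1) → ℝ) (hg : g = (R₁ * R₃) • f)
    (a : ℝ) (ha : a = (∑ j, ∑ p, U j p * y' p) - ∑ p, c p * y' p)
    (h : ℝ) (hh : h = ∑ p, g p * y' p)
    (β : ℝ) (hβ : β = a / b + h * R₂ / (b * R₃)) :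
    β - α = ∑ p, x p * y p := by
  set S := ∑ p, f p * y' p with hS
  have hXry : ∑ p, X r p * y' p = (∑ p, x p * y p) + α := by
    rw [hXr, hy', Fin.sum_univ_castSucc]
    simp [Fin.snoc_castSucc]
  have hUsum : ∑ j, ∑ p, U j p * y' p = ∑ p, (∑ k, (∑ j, Q j k) * X k p) * y' p := by
    subst hU
    rw [Finset.sum_comm]
    congr 1; ext p
    simp [Matrix.mul_apply, Finset.sum_mul]
    rw [Finset.sum_comm]
  have hcsum : ∑ p, c p * y' p
      = (∑ p, (∑ k ∈ univ.erase r, (∑ j, Q j k) * X k p) * y' p) + (R₁ * R₂) * S := by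
    subst hc
    simp [add_mul, Finset.sum_add_distrib, Finset.sum_mul, Finset.mul_sum, hS, mul_assoc]
  have hkey : a = b * ((∑ p, x p * y p) + α) - (R₁ * R₂) * S := by
    rw [ha, hUsum, hcsum, ← hXry, hb]
    have : ∀ p, ∑ k, (∑ j, Q j k) * X k p
        = (∑ k ∈ univ.erase r, (∑ j, Q j k) * X k p) + (∑ j, Q j r) * X r p := by
      intro p
      rw [← Finset.sum_erase_add _ _ (Finset.mem_univ r)]
    have h2 : ∑ p, (∑ k, (∑ j, Q j k) * X k p) * y' p
        = (∑ p, (∑ k ∈ univ.erase r, (∑ j, Q j k) * X k p) * y' p)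
          + (∑ j, Q j r) * ∑ p, X r p * y' p := by
      rw [Finset.mul_sum, ← Finset.sum_add_distrib]
      refine Finset.sum_congr rfl fun p _ => ?_
      rw [this p]; ring
    rw [h2]; ring
  have hhS : h = (R₁ * R₃) * S := by
    rw [hh, hg, hS, Finset.mul_sum]
    simp [mul_assoc]
  rw [hβ, hkey, hhS]
  field_simp
  ring
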